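/- Let I ⊆ ℚ[x₁,…,x_n] be a radical ideal such that the quotient algebra A = ℚ[x₁,…,x_n]/I is a finite-dimensional ℚ-vector space, of dimension δ. Then there exists λ = (λ₁,…,λ_n) ∈ ℚⁿ such that the image ū in A of u = λ₁x₁ + ⋯ + λ_nx_n generates A as a ℚ-algebra; equivalently, the powers 1, ū, ū², …, ū^{δ−1} span A as a ℚ-vector space. (Existence of a primitive element for a zero-dimensional radical ideal over ℚ.) -/

import Mathlib

open Module Polynomial
set_option maxHeartbeats 1000000
set_option synthInstance.maxHeartbeats 400000

noncomputable section

/-- A reduced finite-dimensional ℚ-algebra admits `finrank ℚ A` distinct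
algebra homs into the algebraic closure of ℚ. -/
theorem exists_finset_algHom_card_eq (A : Type*) [CommRing A] [Algebra ℚ A]
    [FiniteDimensional ℚ A] [IsReduced A] :
    ∃ s : Finset (A →ₐ[ℚ] AlgebraicClosure ℚ), s.card = Module.finrank ℚ A := by
  classical
  haveI : IsArtinianRing A := isArtinian_of_tower ℚ inferInstance
  haveI := (IsArtinianRing.setOfPred_isMaximal_finite A).to_subtype
  haveI : Fintype {J : Ideal A | J.IsMaximal} := Fintype.ofFinite _
  letI : ∀ m : {J : Ideal A | J.IsMaximal}, Field (A ⧸ m.1) := fun m =>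
    IsArtinianRing.fieldOfSubtypeIsMaximal A ⟨m.1, m.2⟩
  haveI : ∀ m : {J : Ideal A | J.IsMaximal}, FiniteDimensional ℚ (A ⧸ m.1) := fun m =>
    Module.Finite.of_surjective (Ideal.Quotient.mkₐ ℚ m.1).toLinearMap
      (Ideal.Quotient.mkₐ_surjective ℚ m.1)
  set K := AlgebraicClosure ℚ
  let φ : (Σ m : {J : Ideal A | J.IsMaximal}, ((A ⧸ m.1) →ₐ[ℚ] K)) → (A →ₐ[ℚ] K) :=
    fun t => t.2.comp (Ideal.Quotient.mkₐ ℚ t.1.1)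
  have hφ : Function.Injective φ := by
    rintro ⟨m, σ⟩ ⟨m', σ'⟩ h
    have hker : m.1 = m'.1 := by
      ext a
      have h1 : σ (Ideal.Quotient.mk m.1 a) = σ' (Ideal.Quotient.mk m'.1 a) := by
        have := congrArg (fun f : A →ₐ[ℚ] K => f a) h
        simpa [φ] using this
      constructor
      · intro ha
        have h0 : σ' (Ideal.Quotient.mk m'.1 a) = σ' 0 := by
          rw [map_zero, ← h1, Ideal.Quotient.eq_zero_iff_mem.mpr ha, map_zero]
        exact Ideal.Quotient.eq_zero_iff_mem.mp (σ'.toRingHom.injective h0)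
      · intro ha
        have h0 : σ (Ideal.Quotient.mk m.1 a) = σ 0 := by
          rw [map_zero, h1, Ideal.Quotient.eq_zero_iff_mem.mpr ha, map_zero]
        exact Ideal.Quotient.eq_zero_iff_mem.mp (σ.toRingHom.injective h0)
    have hm : m = m' := Subtype.ext hker
    subst hm
    refine Sigma.ext rfl ?_
    simp only [heq_eq_eq]
    ext x
    obtain ⟨a, rfl⟩ := Ideal.Quotient.mk_surjective x
    exact congrArg (fun f : A →ₐ[ℚ] K => f a) h
  refine ⟨Finset.univ.image φ, ?_⟩
  rw [Finset.card_image_of_injective _ hφ, Finset.card_univ]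
  have hcard : Fintype.card (Σ m : {J : Ideal A | J.IsMaximal}, ((A ⧸ m.1) →ₐ[ℚ] K))
      = ∑ m : {J : Ideal A | J.IsMaximal}, Module.finrank ℚ (A ⧸ m.1) := by
    rw [Fintype.card_sigma]
    congr 1
    ext m
    exact AlgHom.card ℚ (A ⧸ m.1) K
  rw [hcard]
  have := Module.finrank_pi_fintype ℚ (M := fun m : {J : Ideal A | J.IsMaximal} => A ⧸ m.1)
  rw [← this]
  let e : A ≃+* ∀ m : {J : Ideal A | J.IsMaximal}, A ⧸ m.1 :=
    (IsArtinianRing.equivPi A).toRingEquiv.trans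
    (RingEquiv.piCongrLeft' (fun I : MaximalSpectrum A => A ⧸ I.asIdeal) (MaximalSpectrum.equivSubtype A))
  let f : A →ₐ[ℚ] ∀ m : {J : Ideal A | J.IsMaximal}, A ⧸ m.1 :=
    RingHom.toRatAlgHom (e : A →+* _)
  have hbij : Function.Bijective f := e.bijective
  exact ((AlgEquiv.ofBijective f hbij).toLinearEquiv.finrank_eq).symm

end
open Module Polynomial
set_option maxHeartbeats 1000000
set_option synthInstance.maxHeartbeats 400000

theorem minpoly_natDegree_le_finrank (F A : Type*) [Field F] [CommRing A] [Algebra F A]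
    [FiniteDimensional F A] (x : A) :
    (minpoly F x).natDegree ≤ Module.finrank F A := by
  let f := (Algebra.lmul F A) x
  have h2 : Polynomial.aeval x (LinearMap.charpoly f) = 0 := by
    have h3 : (Algebra.lmul F A) (Polynomial.aeval x (LinearMap.charpoly f)) = 0 := by
      rw [← Polynomial.aeval_algHom_apply]
      exact LinearMap.aeval_self_charpoly f
    have h4 := congrArg (fun g : Module.End F A => g 1) h3
    simpa using h4
  have h5 := Polynomial.natDegree_le_natDegree
    (minpoly.min (A := F) x (LinearMap.charpoly_monic f) h2)
  rwa [LinearMap.charpoly_natDegree] at h5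

/-- Existence of a primitive element for a zero-dimensional radical ideal over ℚ:
there is a rational linear form `u = λ₁x₁ + ⋯ + λ_n x_n` whose image `ū` in the
quotient algebra `A = ℚ[x₁,…,x_n]/I` generates `A` as a ℚ-algebra; equivalently,
the powers `1, ū, …, ū^(δ-1)` (with `δ = dim_ℚ A`) span `A` as a ℚ-vector space. -/
theorem exists_primitive_element (n : ℕ) (I : Ideal (MvPolynomial (Fin n) ℚ))
    (hrad : I.IsRadical)
    (hfd : FiniteDimensional ℚ (MvPolynomial (Fin n) ℚ ⧸ I)) :
    ∃ lam : Fin n → ℚ,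
      Algebra.adjoin ℚ
        {Ideal.Quotient.mk I (∑ i, MvPolynomial.C (lam i) * MvPolynomial.X i)} = ⊤ ∧
      Submodule.span ℚ
        (Set.range fun j : Fin (Module.finrank ℚ (MvPolynomial (Fin n) ℚ ⧸ I)) =>
          (Ideal.Quotient.mk I (∑ i, MvPolynomial.C (lam i) * MvPolynomial.X i)) ^ (j : ℕ)) =
        ⊤ := by
  classical
  haveI := hfd
  set A := MvPolynomial (Fin n) ℚ ⧸ I with hA
  set K := AlgebraicClosure ℚ with hK
  haveI : IsReduced A := (Ideal.isRadical_iff_quotient_reduced I).mp hrad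
  obtain ⟨s, hs⟩ := exists_finset_algHom_card_eq A
  set xbar : Fin n → A := fun i => Ideal.Quotient.mk I (MvPolynomial.X i) with hxbar
  -- distinct algebra homs differ on some generator
  have sep : ∀ φ ψ : A →ₐ[ℚ] K, φ ≠ ψ → ∃ i, φ (xbar i) ≠ ψ (xbar i) := by
    intro φ ψ hne
    by_contra h
    push_neg at h
    apply hne
    have hcomp : φ.comp (Ideal.Quotient.mkₐ ℚ I) = ψ.comp (Ideal.Quotient.mkₐ ℚ I) :=
      MvPolynomial.algHom_ext fun i => by
        exact h i
    ext a
    obtain ⟨p, rfl⟩ := Ideal.Quotient.mk_surjective a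
    have := DFunLike.congr_fun hcomp p
    exact this
  -- the linear form associated to a pair of homs
  let L : (A →ₐ[ℚ] K) → (A →ₐ[ℚ] K) → ((Fin n → ℚ) →ₗ[ℚ] K) := fun φ ψ =>
    { toFun := fun v => ∑ i, v i • (φ (xbar i) - ψ (xbar i))
      map_add' := by
        intro v w
        simp [add_smul, Finset.sum_add_distrib]
      map_smul' := by
        intro c v
        simp [mul_smul, Finset.smul_sum] }
  have hLapply : ∀ φ ψ v, L φ ψ v = ∑ i, v i • (φ (xbar i) - ψ (xbar i)) := fun _ _ _ => rfl
  have hLker : ∀ φ ψ : A →ₐ[ℚ] K, φ ≠ ψ → LinearMap.ker (L φ ψ) ≠ ⊤ := by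
    intro φ ψ hne htop
    obtain ⟨i, hi⟩ := sep φ ψ hne
    have hmem : (Pi.single i 1 : Fin n → ℚ) ∈ LinearMap.ker (L φ ψ) := htop ▸ trivial
    have : L φ ψ (Pi.single i 1) = φ (xbar i) - ψ (xbar i) := by
      rw [hLapply]
      rw [Finset.sum_eq_single i]
      · simp
      · intro j _ hj
        simp [Pi.single_apply, hj]
      · simp
    rw [LinearMap.mem_ker, this] at hmem
    exact hi (sub_eq_zero.mp hmem)
  -- avoid the finitely many proper kernels
  set s2 : Finset (Subspace ℚ (Fin n → ℚ)) :=
    ((s ×ˢ s).filter fun p => p.1 ≠ p.2).image fun p => LinearMap.ker (L p.1 p.2) with hs2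
  have htopnm : ⊤ ∉ s2 := by
    intro hmem
    rw [hs2, Finset.mem_image] at hmem
    obtain ⟨p, hp, hker⟩ := hmem
    exact hLker p.1 p.2 (Finset.mem_filter.mp hp).2 hker
  have hcover := Subspace.biUnion_ne_univ_of_top_notMem htopnm
  rw [Set.ne_univ_iff_exists_notMem] at hcover
  obtain ⟨lam, hlam⟩ := hcover
  refine ⟨lam, ?_⟩
  set u : MvPolynomial (Fin n) ℚ := ∑ i, MvPolynomial.C (lam i) * MvPolynomial.X i with hu
  set ubar : A := Ideal.Quotient.mk I u with hubar
  have hub : ubar = ∑ i, lam i • xbar i := by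
    rw [hubar, hu, map_sum]
    refine Finset.sum_congr rfl fun i _ => ?_
    rw [← MvPolynomial.smul_eq_C_mul]
    exact map_smul (Ideal.Quotient.mkₐ ℚ I) (lam i) (MvPolynomial.X i)
  have hval : ∀ φ : A →ₐ[ℚ] K, φ ubar = ∑ i, lam i • φ (xbar i) := by
    intro φ
    rw [hub, map_sum]
    exact Finset.sum_congr rfl fun i _ => map_smul φ (lam i) (xbar i)
  have hdistinct : ∀ φ ∈ s, ∀ ψ ∈ s, φ ≠ ψ → φ ubar ≠ ψ ubar := by
    intro φ hφ ψ hψ hne heq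
    have hker : LinearMap.ker (L φ ψ) ∈ s2 := by
      rw [hs2, Finset.mem_image]
      exact ⟨(φ, ψ), Finset.mem_filter.mpr ⟨Finset.mem_product.mpr ⟨hφ, hψ⟩, hne⟩, rfl⟩
    have hnm : lam ∉ LinearMap.ker (L φ ψ) := by
      intro hmem
      exact hlam (Set.mem_biUnion hker hmem)
    apply hnm
    rw [LinearMap.mem_ker, hLapply]
    rw [← sub_eq_zero] at heq ⊢
    rw [hval, hval, ← Finset.sum_sub_distrib] at heq
    simpa [smul_sub] using heq
  -- the subalgebra generated by ubar
  set B := Algebra.adjoin ℚ {ubar} with hB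
  have hmemB : ubar ∈ B := Algebra.self_mem_adjoin_singleton ℚ ubar
  -- linear independence of the restricted homs
  let w : {φ // φ ∈ s} → (B →ₗ[ℚ] K) := fun φ => (φ.1.comp B.val).toLinearMap
  have hg : Function.Injective
      (fun φ : {φ // φ ∈ s} => ((φ.1.comp B.val : B →ₐ[ℚ] K) : B →* K)) := by
    intro φ ψ h
    by_contra hne
    have hne' : φ.1 ≠ ψ.1 := fun hc => hne (Subtype.ext hc)
    apply hdistinct φ.1 φ.2 ψ.1 ψ.2 hne'
    have := DFunLike.congr_fun h (⟨ubar, hmemB⟩ : B)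
    simpa using this
  have hli1 : LinearIndependent K
      (fun φ : {φ // φ ∈ s} => ⇑((φ.1.comp B.val : B →ₐ[ℚ] K) : B →* K)) :=
    (linearIndependent_monoidHom B K).comp _ hg
  let coeLM : (B →ₗ[ℚ] K) →ₗ[K] (B → K) :=
    { toFun := fun f => ⇑f
      map_add' := fun f g => rfl
      map_smul' := fun c f => rfl }
  have hli : LinearIndependent K w := by
    apply LinearIndependent.of_comp coeLM
    exact hli1
  haveI : FiniteDimensional ℚ B := inferInstance
  let b := Module.finBasis ℚ B
  let E := b.constr K (M' := K)
  haveI : Module.Finite K (B →ₗ[ℚ] K) := Module.Finite.equiv E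
  have hcard : Fintype.card {φ // φ ∈ s} ≤ finrank K (B →ₗ[ℚ] K) :=
    hli.fintype_card_le_finrank
  have hfr : finrank K (B →ₗ[ℚ] K) = finrank ℚ B := by
    rw [← E.finrank_eq, finrank_fin_fun]
  have hle1 : finrank ℚ A ≤ finrank ℚ B := by
    rw [← hs, ← Fintype.card_coe]
    rw [hfr] at hcard
    exact hcard
  have hle2 : finrank ℚ B ≤ finrank ℚ A := Submodule.finrank_le (Subalgebra.toSubmodule B)
  have heqr : finrank ℚ (Subalgebra.toSubmodule B) = finrank ℚ A := le_antisymm hle2 hle1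
  have htopB : B = ⊤ := by
    have := Submodule.eq_top_of_finrank_eq heqr
    rwa [Algebra.toSubmodule_eq_top] at this
  refine ⟨htopB, ?_⟩
  -- the powers span
  rcases subsingleton_or_nontrivial A with hss | hnt
  · exact eq_top_iff.mpr fun x _ => by
      rw [Subsingleton.elim x 0]; exact Submodule.zero_mem _
  · have hint : IsIntegral ℚ ubar := IsIntegral.of_finite ℚ ubar
    set m := minpoly ℚ ubar with hm
    have hmon : m.Monic := minpoly.monic hint
    -- degree bound via the characteristic polynomial of multiplication by ubar
    have hdeg : m.natDegree ≤ finrank ℚ A :=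
      minpoly_natDegree_le_finrank ℚ A ubar
    have hm1 : m ≠ 1 := by
      intro hc
      have h0 := minpoly.natDegree_pos hint
      rw [← hm, hc] at h0
      simp at h0
    rw [eq_top_iff]
    rintro a -
    have ha : a ∈ B := by rw [htopB]; trivial
    rw [hB, Algebra.adjoin_singleton_eq_range_aeval] at ha
    obtain ⟨p, hp⟩ := ha
    have hr : Polynomial.aeval ubar (p %ₘ m) = a := by
      rw [Polynomial.aeval_modByMonic_eq_self_of_root (minpoly.aeval ℚ ubar)]
      exact hp
    have hrd : (p %ₘ m).natDegree < finrank ℚ A :=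
      lt_of_lt_of_le (Polynomial.natDegree_modByMonic_lt p hmon hm1) hdeg
    rw [← hr, Polynomial.aeval_eq_sum_range' hrd]
    apply Submodule.sum_mem
    intro i hi
    apply Submodule.smul_mem
    apply Submodule.subset_span
    exact ⟨⟨i, Finset.mem_range.mp hi⟩, rfl⟩
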